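/- arXiv:1407.8238 — 7 statements merged into one kernel-verified Lean document; each statement's English description precedes it below -/
import Mathlib

section
/- Let α ∈ [0, 1/3) and let (α_k) be nondecreasing with 0 ≤ α_k ≤ α. Let (φ_k)_{k≥−1} be nonnegative reals with φ_{−1} = φ_0, and let (s_k)_{k≥0} be nonnegative reals with s_0 = 0. Define μ_k := φ_k − α_k φ_{k−1} + 2α_k s_k, and suppose φ_{k+1} − φ_k − α_k(φ_k − φ_{k−1}) ≤ −(1−α_k) s_{k+1} + 2α_k s_k for all k ≥ 0. Then (μ_k) is nonincreasing, (1−3α)·∑_{j=0}^∞ s_{j+1} ≤ 2φ_0, and φ_k ≤ α^k φ_0 + φ_0/(1−α) for all k. -/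
/-- Key estimates of the inertial PPA analysis. Here `φ (k-1)` (truncated subtraction)
encodes `φ_{k-1}` with the convention `φ_{-1} = φ_0`. -/
theorem stmt6 (α : ℝ) (hα0 : 0 ≤ α) (hα : α < 1 / 3)
    (αk : ℕ → ℝ) (hαk0 : ∀ k, 0 ≤ αk k) (hαkα : ∀ k, αk k ≤ α)
    (hαkmono : ∀ k, αk k ≤ αk (k + 1))
    (φ : ℕ → ℝ) (hφ : ∀ k, 0 ≤ φ k)
    (s : ℕ → ℝ) (hs : ∀ k, 0 ≤ s k) (hs0 : s 0 = 0)
    (hrec : ∀ k, φ (k + 1) - φ k - αk k * (φ k - φ (k - 1)) ≤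
        -(1 - αk k) * s (k + 1) + 2 * αk k * s k) :
    (∀ k, (φ (k + 1) - αk (k + 1) * φ k + 2 * αk (k + 1) * s (k + 1)) ≤
        (φ k - αk k * φ (k - 1) + 2 * αk k * s k)) ∧
    (∀ n, (1 - 3 * α) * ∑ j ∈ Finset.range n, s (j + 1) ≤ 2 * φ 0) ∧
    (∀ k, φ k ≤ α ^ k * φ 0 + φ 0 / (1 - α)) := by
  set μ : ℕ → ℝ := fun k => φ k - αk k * φ (k - 1) + 2 * αk k * s k with hμ
  have key : ∀ k, μ (k + 1) ≤ μ k + (3 * α - 1) * s (k + 1) := by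
    intro k
    have h := hrec k
    have h1 := hαkmono k
    have h2 := hφ k
    have h3 := hs (k + 1)
    have h4 := hαkα k
    have h5 := hαkα (k + 1)
    simp only [hμ, Nat.add_sub_cancel]
    nlinarith [mul_nonneg (sub_nonneg.2 h1) h2,
      mul_nonneg (by linarith : (0:ℝ) ≤ 3 * α - αk k - 2 * αk (k + 1)) h3]
  have hmono : ∀ k, μ (k + 1) ≤ μ k := by
    intro k
    have := key k
    nlinarith [hs (k + 1)]
  have hμ0 : μ 0 ≤ φ 0 := by
    simp only [hμ, Nat.zero_sub, hs0]
    nlinarith [mul_nonneg (hαk0 0) (hφ 0)]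
  have htel : ∀ n, μ n + (1 - 3 * α) * ∑ j ∈ Finset.range n, s (j + 1) ≤ μ 0 := by
    intro n
    induction n with
    | zero => simp
    | succ m ih =>
      rw [Finset.sum_range_succ]
      have := key m
      nlinarith
  have hlow : ∀ k, φ (k + 1) - α * φ k ≤ μ (k + 1) := by
    intro k
    simp only [hμ, Nat.add_sub_cancel]
    nlinarith [hs (k + 1), hαkα (k + 1), hφ k, hαk0 (k + 1),
      mul_nonneg (hαk0 (k + 1)) (hs (k + 1)),
      mul_nonneg (sub_nonneg.2 (hαkα (k + 1))) (hφ k)]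
  have hstep : ∀ k, φ (k + 1) ≤ α * φ k + φ 0 := by
    intro k
    have h1 := hlow k
    have h2 : μ (k + 1) ≤ μ 0 := by
      have := htel (k + 1)
      have hsum : 0 ≤ ∑ j ∈ Finset.range (k + 1), s (j + 1) :=
        Finset.sum_nonneg fun j _ => hs (j + 1)
      nlinarith
    linarith
  have hα1 : (0:ℝ) < 1 - α := by linarith
  have hgeo : ∀ k, φ k ≤ α ^ k * φ 0 + φ 0 / (1 - α) := by
    intro k
    induction k with
    | zero =>
      simp only [pow_zero, one_mul]
      have : 0 ≤ φ 0 / (1 - α) := div_nonneg (hφ 0) hα1.le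
      linarith
    | succ m ih =>
      have h1 := hstep m
      have h2 : α * φ m ≤ α * (α ^ m * φ 0 + φ 0 / (1 - α)) :=
        mul_le_mul_of_nonneg_left ih hα0
      have h3 : α * (φ 0 / (1 - α)) + φ 0 = φ 0 / (1 - α) := by
        field_simp
        ring
      calc φ (m + 1) ≤ α * φ m + φ 0 := h1
        _ ≤ α * (α ^ m * φ 0 + φ 0 / (1 - α)) + φ 0 := by linarith
        _ = α ^ (m + 1) * φ 0 + (α * (φ 0 / (1 - α)) + φ 0) := by ring
        _ = α ^ (m + 1) * φ 0 + φ 0 / (1 - α) := by rw [h3]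
  refine ⟨fun k => by have := hmono k; simpa [hμ] using this, ?_, hgeo⟩
  intro n
  cases n with
  | zero =>
    simp only [Finset.range_zero, Finset.sum_empty, mul_zero]
    nlinarith [hφ 0]
  | succ m =>
    have h1 := htel (m + 1)
    have h2 := hlow m
    have h3 : φ m ≤ α ^ m * φ 0 + φ 0 / (1 - α) := hgeo m
    have h4 : α ^ m ≤ 1 := pow_le_one₀ hα0 (by linarith)
    have h5 : φ 0 / (1 - α) ≤ (3 / 2) * φ 0 := by
      rw [div_le_iff₀ hα1]
      nlinarith [hφ 0]
    have h6 : μ (m + 1) ≥ -α * φ m := by nlinarith [hφ (m + 1)]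
    have h7 : φ m ≤ (5 / 2) * φ 0 := by nlinarith [hφ 0]
    nlinarith [hφ 0, mul_le_mul_of_nonneg_left h7 hα0]
end

section
/- Let H be a real Hilbert space (or ℝⁿ), F : H → H a mapping and H₀ a positive semidefinite self-adjoint operator such that ⟨u−v, F(u)−F(v)⟩ ≥ ‖u−v‖²_{H₀} for all u,v. Let G be positive semidefinite self-adjoint with G + H₀ positive definite, θ : H → ℝ closed proper convex, Ω ⊆ H closed convex, and λ > 0. Then for any z ∈ H there is at most one w ∈ Ω satisfying θ(u) − θ(w) + ⟨u − w, F(w) + λ^{-1}G(w − z)⟩ ≥ 0 for all u ∈ Ω. -/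
open scoped InnerProductSpace

/-- Uniqueness of the resolvent point in the general inertial proximal point step. -/
theorem stmt7 {E : Type*} [NormedAddCommGroup E] [InnerProductSpace ℝ E]
    (F : E → E) (H₀ G : E →L[ℝ] E)
    (hH₀sa : ∀ u v, ⟪H₀ u, v⟫_ℝ = ⟪u, H₀ v⟫_ℝ) (hGsa : ∀ u v, ⟪G u, v⟫_ℝ = ⟪u, G v⟫_ℝ)
    (hH₀psd : ∀ u, 0 ≤ ⟪u, H₀ u⟫_ℝ) (hGpsd : ∀ u, 0 ≤ ⟪u, G u⟫_ℝ)
    (hmono : ∀ u v, ⟪u - v, F u - F v⟫_ℝ ≥ ⟪u - v, H₀ (u - v)⟫_ℝ)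
    (hpd : ∀ u, u ≠ 0 → 0 < ⟪u, (G + H₀) u⟫_ℝ)
    (θ : E → ℝ) (hθ : ConvexOn ℝ Set.univ θ)
    (Ω : Set E) (hΩc : IsClosed Ω) (hΩconv : Convex ℝ Ω)
    (lam : ℝ) (hlam : 0 < lam) (z : E) (w₁ w₂ : E)
    (hw₁ : w₁ ∈ Ω) (hw₂ : w₂ ∈ Ω)
    (h₁ : ∀ u ∈ Ω, θ u - θ w₁ + ⟪u - w₁, F w₁ + lam⁻¹ • G (w₁ - z)⟫_ℝ ≥ 0)
    (h₂ : ∀ u ∈ Ω, θ u - θ w₂ + ⟪u - w₂, F w₂ + lam⁻¹ • G (w₂ - z)⟫_ℝ ≥ 0) :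
    w₁ = w₂ := by
  by_contra hne
  set d := w₁ - w₂ with hd
  have hdne : d ≠ 0 := sub_ne_zero.mpr hne
  have A := h₁ w₂ hw₂
  have B := h₂ w₁ hw₁
  have hsum : 0 ≤ ⟪w₂ - w₁, F w₁ + lam⁻¹ • G (w₁ - z)⟫_ℝ
      + ⟪w₁ - w₂, F w₂ + lam⁻¹ • G (w₂ - z)⟫_ℝ := by linarith
  have key : ⟪d, F w₁ - F w₂⟫_ℝ + lam⁻¹ * ⟪d, G d⟫_ℝ ≤ 0 := by
    have h1 : ⟪w₂ - w₁, F w₁ + lam⁻¹ • G (w₁ - z)⟫_ℝ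
        = -⟪d, F w₁⟫_ℝ - lam⁻¹ * ⟪d, G (w₁ - z)⟫_ℝ := by
      rw [show w₂ - w₁ = -d by simp [hd], inner_neg_left, inner_add_right,
        real_inner_smul_right]; ring
    have h2 : ⟪w₁ - w₂, F w₂ + lam⁻¹ • G (w₂ - z)⟫_ℝ
        = ⟪d, F w₂⟫_ℝ + lam⁻¹ * ⟪d, G (w₂ - z)⟫_ℝ := by
      rw [inner_add_right, real_inner_smul_right]
    have h3 : ⟪d, G (w₁ - z)⟫_ℝ - ⟪d, G (w₂ - z)⟫_ℝ = ⟪d, G d⟫_ℝ := by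
      rw [← inner_sub_right, ← map_sub]
      congr 1
      rw [hd]; congr 1; abel
    have h4 : ⟪d, F w₁ - F w₂⟫_ℝ = ⟪d, F w₁⟫_ℝ - ⟪d, F w₂⟫_ℝ := inner_sub_right _ _ _
    rw [h1, h2] at hsum
    have h5 : lam⁻¹ * ⟪d, G d⟫_ℝ
        = lam⁻¹ * ⟪d, G (w₁ - z)⟫_ℝ - lam⁻¹ * ⟪d, G (w₂ - z)⟫_ℝ := by
      rw [← h3]; ring
    linarith
  have hmono' := hmono w₁ w₂
  have hH := hH₀psd d
  have hG := hGpsd d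
  have hlam' := inv_pos.mpr hlam
  have hpd' := hpd d hdne
  have : ⟪d, (G + H₀) d⟫_ℝ = ⟪d, G d⟫_ℝ + ⟪d, H₀ d⟫_ℝ := by
    simp [inner_add_right]
  nlinarith [mul_nonneg hlam'.le hG]
end

section
/- Let Ω ⊆ ℝⁿ be closed convex, θ : ℝⁿ → ℝ convex, F : ℝⁿ → ℝⁿ monotone and continuous, G symmetric positive semidefinite, λ_k ≥ λ > 0. Suppose w^{k_j} → w★ with w^{k_j} ∈ Ω, G(w^{k_j} − z^{k_j−1}) → 0, and for each j and all w ∈ Ω: θ(w) − θ(w^{k_j}) + ⟨w − w^{k_j}, F(w^{k_j})⟩ ≥ λ_{k_j−1}^{-1}⟨w^{k_j} − w, G(w^{k_j} − z^{k_j−1})⟩. Then w★ ∈ Ω and θ(w) − θ(w★) + ⟨w − w★, F(w★)⟩ ≥ 0 for all w ∈ Ω, i.e., w★ solves the mixed variational inequality. -/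
open scoped Matrix

set_option maxHeartbeats 1000000

/-- Any limit point of the (sub)sequence of inertial proximal iterates solves the mixed VI. -/
theorem stmt8 {n : ℕ} (Ω : Set (Fin n → ℝ)) (hΩc : IsClosed Ω) (hΩconv : Convex ℝ Ω)
    (θ : (Fin n → ℝ) → ℝ) (hθconv : ConvexOn ℝ Set.univ θ) (hθcont : Continuous θ)
    (F : (Fin n → ℝ) → (Fin n → ℝ)) (hFmono : ∀ u v, 0 ≤ (u - v) ⬝ᵥ (F u - F v))
    (hFcont : Continuous F)
    (G : Matrix (Fin n) (Fin n) ℝ) (hG : G.PosSemidef)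
    (lam₀ : ℝ) (hlam₀ : 0 < lam₀) (lam : ℕ → ℝ) (hlam : ∀ j, lam₀ ≤ lam j)
    (w z : ℕ → (Fin n → ℝ)) (wstar : Fin n → ℝ)
    (hwΩ : ∀ j, w j ∈ Ω)
    (hwlim : Filter.Tendsto w Filter.atTop (nhds wstar))
    (hGlim : Filter.Tendsto (fun j => G.mulVec (w j - z j)) Filter.atTop (nhds 0))
    (hineq : ∀ j, ∀ u ∈ Ω,
      θ u - θ (w j) + (u - w j) ⬝ᵥ F (w j) ≥
        (lam j)⁻¹ * ((w j - u) ⬝ᵥ G.mulVec (w j - z j))) :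
    wstar ∈ Ω ∧ ∀ u ∈ Ω, θ u - θ wstar + (u - wstar) ⬝ᵥ F wstar ≥ 0 := by
  have hmem : wstar ∈ Ω := hΩc.mem_of_tendsto hwlim (Filter.Eventually.of_forall hwΩ)
  refine ⟨hmem, fun u hu => ?_⟩
  -- RHS tends to 0
  have hd : Filter.Tendsto (fun j => (w j - u) ⬝ᵥ G.mulVec (w j - z j))
      Filter.atTop (nhds 0) := by
    have h1 : Filter.Tendsto (fun j => w j - u) Filter.atTop (nhds (wstar - u)) :=
      hwlim.sub tendsto_const_nhds
    have hc : Continuous fun p : (Fin n → ℝ) × (Fin n → ℝ) => p.1 ⬝ᵥ p.2 :=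
      continuous_fst.dotProduct continuous_snd
    have := (hc.tendsto (wstar - u, (0 : Fin n → ℝ))).comp (h1.prodMk_nhds hGlim)
    simpa only [Function.comp_def, dotProduct_zero] using this
  have hrhs : Filter.Tendsto (fun j => (lam j)⁻¹ * ((w j - u) ⬝ᵥ G.mulVec (w j - z j)))
      Filter.atTop (nhds 0) := by
    apply squeeze_zero_norm (a := fun j => lam₀⁻¹ * ‖(w j - u) ⬝ᵥ G.mulVec (w j - z j)‖)
    · intro j
      rw [norm_mul]
      apply mul_le_mul_of_nonneg_right _ (norm_nonneg _)
      rw [Real.norm_eq_abs, abs_of_nonneg (inv_nonneg.2 (le_of_lt (lt_of_lt_of_le hlam₀ (hlam j))))]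
      exact inv_anti₀ hlam₀ (hlam j)
    · have := hd.norm
      simpa using (tendsto_const_nhds (x := lam₀⁻¹)).mul this
  -- LHS tends to the goal expression
  have hlhs : Filter.Tendsto (fun j => θ u - θ (w j) + (u - w j) ⬝ᵥ F (w j))
      Filter.atTop (nhds (θ u - θ wstar + (u - wstar) ⬝ᵥ F wstar)) := by
    have h1 : Filter.Tendsto (fun j => θ (w j)) Filter.atTop (nhds (θ wstar)) :=
      (hθcont.tendsto _).comp hwlim
    have h2 : Filter.Tendsto (fun j => u - w j) Filter.atTop (nhds (u - wstar)) :=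
      tendsto_const_nhds.sub hwlim
    have h3 : Filter.Tendsto (fun j => F (w j)) Filter.atTop (nhds (F wstar)) :=
      (hFcont.tendsto _).comp hwlim
    have hc : Continuous fun p : (Fin n → ℝ) × (Fin n → ℝ) => p.1 ⬝ᵥ p.2 :=
      continuous_fst.dotProduct continuous_snd
    have h4 : Filter.Tendsto (fun j => (u - w j) ⬝ᵥ F (w j)) Filter.atTop
        (nhds ((u - wstar) ⬝ᵥ F wstar)) :=
      (hc.tendsto (u - wstar, F wstar)).comp (h2.prodMk_nhds h3)
    exact ((tendsto_const_nhds (x := θ u)).sub h1).add h4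
  exact le_of_tendsto_of_tendsto' hrhs hlhs (fun j => hineq j u hu)
end

section
/- Let A ∈ ℝ^{m×n₁}, B ∈ ℝ^{m×n₂}, β > 0, and 0 < τ < 1/ρ(AᵀA), 0 < η < 1/ρ(BᵀB). Then the block matrix G = [[β(τ^{-1}I − AᵀA), 0, 0], [0, (β/η)I, −Bᵀ], [0, −B, β^{-1}I]] (of order n₁+n₂+m) is symmetric positive definite. -/
open scoped Matrix

/-- The linearized-ADMM weighting matrix `G` is symmetric positive definite when
`0 < τ < 1/ρ(AᵀA)` and `0 < η < 1/ρ(BᵀB)`.  Here `ρA` and `ρB` are the spectral radii of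
`AᵀA` and `BᵀB`, characterized as the best Rayleigh-quotient bounds. -/
theorem stmt10 {m n₁ n₂ : ℕ} (A : Matrix (Fin m) (Fin n₁) ℝ) (B : Matrix (Fin m) (Fin n₂) ℝ)
    (β τ η ρA ρB : ℝ) (hβ : 0 < β) (hτ : 0 < τ) (hη : 0 < η)
    (hρA : ∀ x : Fin n₁ → ℝ, x ⬝ᵥ (Aᵀ * A).mulVec x ≤ ρA * (x ⬝ᵥ x))
    (hρB : ∀ y : Fin n₂ → ℝ, y ⬝ᵥ (Bᵀ * B).mulVec y ≤ ρB * (y ⬝ᵥ y))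
    (hτρ : τ * ρA < 1) (hηρ : η * ρB < 1) :
    (Matrix.fromBlocks
        (β • (τ⁻¹ • (1 : Matrix (Fin n₁) (Fin n₁) ℝ) - Aᵀ * A)) 0 0
        (Matrix.fromBlocks ((β / η) • (1 : Matrix (Fin n₂) (Fin n₂) ℝ)) (-Bᵀ)
          (-B) (β⁻¹ • (1 : Matrix (Fin m) (Fin m) ℝ)))).PosDef := by
  rw [Matrix.posDef_iff_dotProduct_mulVec]
  constructor
  · show _ = _
    simp [Matrix.fromBlocks_conjTranspose, Matrix.conjTranspose_smul, Matrix.conjTranspose_sub,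
      Matrix.conjTranspose_mul, Matrix.conjTranspose_one, Matrix.fromBlocks_transpose,
      Matrix.transpose_smul, Matrix.transpose_sub, Matrix.transpose_mul, Matrix.transpose_one,
      Matrix.transpose_transpose, Matrix.transpose_neg]
  · intro x hx
    set u : Fin n₁ → ℝ := x ∘ Sum.inl with hu
    set y : Fin n₂ → ℝ := x ∘ Sum.inr ∘ Sum.inl with hy
    set z : Fin m → ℝ := x ∘ Sum.inr ∘ Sum.inr with hz
    have hxe : x = Sum.elim u (Sum.elim y z) := by
      funext i
      rcases i with i | i
      · rfl
      · rcases i with i | i <;> rfl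
    have h1 : y ⬝ᵥ (Bᵀ *ᵥ z) = z ⬝ᵥ (B *ᵥ y) := by
      rw [Matrix.dotProduct_mulVec, Matrix.vecMul_transpose, dotProduct_comm]
    have key : dotProduct (star x) ((Matrix.fromBlocks
        (β • (τ⁻¹ • (1 : Matrix (Fin n₁) (Fin n₁) ℝ) - Aᵀ * A)) 0 0
        (Matrix.fromBlocks ((β / η) • (1 : Matrix (Fin n₂) (Fin n₂) ℝ)) (-Bᵀ)
          (-B) (β⁻¹ • (1 : Matrix (Fin m) (Fin m) ℝ)))) *ᵥ x)
        = β * (τ⁻¹ * (u ⬝ᵥ u) - u ⬝ᵥ (Aᵀ * A).mulVec u)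
          + ((β / η) * (y ⬝ᵥ y) - 2 * (z ⬝ᵥ (B *ᵥ y)) + β⁻¹ * (z ⬝ᵥ z)) := by
      rw [hxe]
      simp only [star_trivial, Matrix.fromBlocks_mulVec, Matrix.dotProduct_block,
        Sum.elim_comp_inl, Sum.elim_comp_inr,
        Matrix.smul_mulVec, Matrix.sub_mulVec, Matrix.one_mulVec, Matrix.neg_mulVec,
        Matrix.zero_mulVec, dotProduct_smul, dotProduct_add,
        dotProduct_sub, dotProduct_neg, dotProduct_zero,
        add_zero, zero_add, smul_eq_mul]
      rw [h1]
      ring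
    rw [key]
    have hAq : u ⬝ᵥ (Aᵀ * A).mulVec u ≤ ρA * (u ⬝ᵥ u) := hρA u
    have hBq : (B *ᵥ y) ⬝ᵥ (B *ᵥ y) ≤ ρB * (y ⬝ᵥ y) := by
      have h2 : (B *ᵥ y) ⬝ᵥ (B *ᵥ y) = y ⬝ᵥ (Bᵀ * B).mulVec y := by
        conv_rhs => rw [← Matrix.mulVec_mulVec, Matrix.dotProduct_mulVec, Matrix.vecMul_transpose]
      rw [h2]; exact hρB y
    have sq_nonneg' : ∀ {k : ℕ} (v : Fin k → ℝ), 0 ≤ v ⬝ᵥ v := fun v => by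
      simpa using dotProduct_star_self_nonneg v
    have sq_pos : ∀ {k : ℕ} (v : Fin k → ℝ), v ≠ 0 → 0 < v ⬝ᵥ v := fun v hv => by
      have := Matrix.dotProduct_star_self_pos_iff (v := v)
      simpa [hv] using this
    -- first block quadratic is nonneg, positive if u ≠ 0
    have hρApos : ρA < τ⁻¹ := by
      rw [← one_div, lt_div_iff₀ hτ]; nlinarith
    have hρBpos : ρB < η⁻¹ := by
      rw [← one_div, lt_div_iff₀ hη]; nlinarith
    set w := B *ᵥ y with hw
    have hexp : (z - β • w) ⬝ᵥ (z - β • w)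
        = z ⬝ᵥ z - 2 * β * (z ⬝ᵥ w) + β ^ 2 * (w ⬝ᵥ w) := by
      simp only [dotProduct_sub, sub_dotProduct, smul_dotProduct,
        dotProduct_smul, smul_eq_mul, dotProduct_comm w z]
      ring
    have hsq : 0 ≤ (z - β • w) ⬝ᵥ (z - β • w) := sq_nonneg' _
    rw [hexp] at hsq
    have hβinv : β * β⁻¹ = 1 := mul_inv_cancel₀ (ne_of_gt hβ)
    have h2zw : 2 * (z ⬝ᵥ w) ≤ β⁻¹ * (z ⬝ᵥ z) + β * (w ⬝ᵥ w) := by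
      have h3 := mul_nonneg (inv_pos.mpr hβ).le hsq
      have e : β⁻¹ * (z ⬝ᵥ z - 2 * β * (z ⬝ᵥ w) + β ^ 2 * (w ⬝ᵥ w))
          = β⁻¹ * (z ⬝ᵥ z) - (β * β⁻¹) * (2 * (z ⬝ᵥ w)) + (β * β⁻¹) * (β * (w ⬝ᵥ w)) := by
        ring
      rw [e, hβinv] at h3
      linarith
    have hb1 : β * (w ⬝ᵥ w) ≤ β * (ρB * (y ⬝ᵥ y)) := mul_le_mul_of_nonneg_left hBq hβ.le
    have hb2 : 0 ≤ β * ((η⁻¹ - ρB) * (y ⬝ᵥ y)) :=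
      mul_nonneg hβ.le (mul_nonneg (sub_pos.mpr hρBpos).le (sq_nonneg' y))
    have hb3 : β * ((η⁻¹ - ρB) * (y ⬝ᵥ y)) = β * η⁻¹ * (y ⬝ᵥ y) - β * (ρB * (y ⬝ᵥ y)) := by ring
    rw [div_eq_mul_inv]
    by_cases hu0 : u = 0
    · rw [hu0]
      simp only [zero_dotProduct, Matrix.mulVec_zero, dotProduct_zero,
        mul_zero, sub_zero, zero_sub, neg_zero, add_zero, zero_add]
      by_cases hy0 : y = 0
      · have hw0 : w = 0 := by rw [hw, hy0, Matrix.mulVec_zero]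
        have hz0 : z ≠ 0 := by
          intro h
          apply hx
          rw [hxe, hu0, hy0, h]
          funext i
          rcases i with i | i
          · rfl
          · rcases i with i | i <;> rfl
        rw [hy0, hw0]
        simp only [zero_dotProduct, dotProduct_zero, mul_zero, zero_sub,
          neg_zero, zero_add, add_zero, sub_zero]
        have := mul_pos (inv_pos.mpr hβ) (sq_pos z hz0)
        linarith
      · have hb2' : 0 < β * ((η⁻¹ - ρB) * (y ⬝ᵥ y)) :=
          mul_pos hβ (mul_pos (sub_pos.mpr hρBpos) (sq_pos y hy0))
        linarith
    · have huu := sq_pos u hu0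
      have hQ1 : β * ((τ⁻¹ - ρA) * (u ⬝ᵥ u)) ≤ β * (τ⁻¹ * (u ⬝ᵥ u) - u ⬝ᵥ (Aᵀ * A).mulVec u) := by
        apply mul_le_mul_of_nonneg_left _ hβ.le
        linarith
      have hQ1' := mul_pos hβ (mul_pos (sub_pos.mpr hρApos) huu)
      linarith
end

section
/- Let Ω ⊆ ℝⁿ be convex, θ : ℝⁿ → ℝ convex, F(w) = Lw + c with L skew-symmetric, G symmetric positive semidefinite, and w⁰, w¹, w², ..., a sequence in Ω satisfying θ(w) − θ(w^{i+1}) + ⟨w − w^{i+1}, F(w^{i+1}) + G(w^{i+1} − w^i)⟩ ≥ 0 for all w ∈ Ω and all i. Then for every k ≥ 0 and every w ∈ Ω, the ergodic average w̄^k := (1/(k+1))∑_{i=0}^k w^{i+1} satisfies θ(w) − θ(w̄^k) + ⟨w − w̄^k, F(w)⟩ ≥ −‖w − w⁰‖_G² / (2(k+1)). -/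
open scoped Matrix

private lemma sum_dotProduct' {n : ℕ} (s : Finset ℕ) (f : ℕ → (Fin n → ℝ)) (v : Fin n → ℝ) :
    (∑ i ∈ s, f i) ⬝ᵥ v = ∑ i ∈ s, f i ⬝ᵥ v := by
  classical
  induction s using Finset.induction_on with
  | empty => simp
  | insert a s h ih => simp [Finset.sum_insert h, add_dotProduct, ih]

/-- Ergodic O(1/k) rate of the proximal point method for a mixed VI with skew-affine `F`. -/
theorem stmt12 {n : ℕ} (Ω : Set (Fin n → ℝ)) (hΩconv : Convex ℝ Ω)
    (θ : (Fin n → ℝ) → ℝ) (hθconv : ConvexOn ℝ Set.univ θ)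
    (L : Matrix (Fin n) (Fin n) ℝ) (hL : Lᵀ = -L) (c : Fin n → ℝ)
    (F : (Fin n → ℝ) → (Fin n → ℝ)) (hF : ∀ w, F w = L.mulVec w + c)
    (G : Matrix (Fin n) (Fin n) ℝ) (hG : G.PosSemidef)
    (w : ℕ → (Fin n → ℝ)) (hw0 : w 0 ∈ Ω) (hwΩ : ∀ i, w (i + 1) ∈ Ω)
    (hiter : ∀ i, ∀ u ∈ Ω, θ u - θ (w (i + 1)) +
      (u - w (i + 1)) ⬝ᵥ (F (w (i + 1)) + G.mulVec (w (i + 1) - w i)) ≥ 0) :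
    ∀ k : ℕ, ∀ u ∈ Ω,
      θ u - θ (((k + 1 : ℝ))⁻¹ • ∑ i ∈ Finset.range (k + 1), w (i + 1)) +
        (u - ((k + 1 : ℝ))⁻¹ • ∑ i ∈ Finset.range (k + 1), w (i + 1)) ⬝ᵥ F u ≥
          -((u - w 0) ⬝ᵥ G.mulVec (u - w 0)) / (2 * (k + 1)) := by
  intro k u hu
  set K : ℝ := (k + 1 : ℝ) with hKdef
  have hKpos : (0 : ℝ) < K := by positivity
  set Q : (Fin n → ℝ) → ℝ := fun x => x ⬝ᵥ G.mulVec x with hQdef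
  have hGt : Gᵀ = G := by
    have := hG.1.eq; rwa [Matrix.conjTranspose_eq_transpose_of_trivial] at this
  have hGsym : ∀ a b : Fin n → ℝ, a ⬝ᵥ G.mulVec b = b ⬝ᵥ G.mulVec a := by
    intro a b
    rw [Matrix.dotProduct_mulVec, ← Matrix.mulVec_transpose, hGt, dotProduct_comm]
  have hQnonneg : ∀ x, 0 ≤ Q x := fun x => by simpa using hG.dotProduct_mulVec_nonneg x
  -- polarization identity for the G-form
  have hpolar : ∀ a b : Fin n → ℝ, 2 * (a ⬝ᵥ G.mulVec b) = Q a + Q b - Q (a - b) := by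
    intro a b
    have : Q (a - b) = Q a - a ⬝ᵥ G.mulVec b - b ⬝ᵥ G.mulVec a + Q b := by
      simp only [hQdef, Matrix.mulVec_sub, sub_dotProduct, dotProduct_sub]
      ring
    rw [this, hGsym a b]; ring
  -- skew-symmetry of L : x ⬝ L x = 0
  have hskew : ∀ x : Fin n → ℝ, x ⬝ᵥ L.mulVec x = 0 := by
    intro x
    have h1 : x ⬝ᵥ L.mulVec x = (Lᵀ.mulVec x) ⬝ᵥ x := by
      rw [Matrix.dotProduct_mulVec, ← Matrix.mulVec_transpose]
    rw [hL] at h1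
    have h2 : ((-L).mulVec x) ⬝ᵥ x = -(x ⬝ᵥ L.mulVec x) := by
      rw [Matrix.neg_mulVec, neg_dotProduct, dotProduct_comm]
    rw [h2] at h1; linarith
  -- per-step inequality
  have hstep : ∀ i, θ u - θ (w (i + 1)) + (u - w (i + 1)) ⬝ᵥ F u ≥
      (Q (u - w (i + 1)) - Q (u - w i)) / 2 := by
    intro i
    have hit := hiter i u hu
    set a : Fin n → ℝ := u - w (i + 1) with ha
    set b : Fin n → ℝ := w i - w (i + 1) with hb
    have hFe : a ⬝ᵥ F (w (i + 1)) = a ⬝ᵥ F u := by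
      have : F u - F (w (i + 1)) = L.mulVec a := by
        rw [hF, hF, ha, Matrix.mulVec_sub]; abel
      have h2 : a ⬝ᵥ (F u - F (w (i + 1))) = 0 := by rw [this]; exact hskew a
      have h3 : a ⬝ᵥ (F u - F (w (i + 1))) = a ⬝ᵥ F u - a ⬝ᵥ F (w (i + 1)) :=
        dotProduct_sub a _ _
      linarith
    have hGe : a ⬝ᵥ G.mulVec (w (i + 1) - w i) = -(a ⬝ᵥ G.mulVec b) := by
      have : w (i + 1) - w i = -b := by rw [hb]; abel
      rw [this, Matrix.mulVec_neg, dotProduct_neg]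
    have hexp : a ⬝ᵥ (F (w (i + 1)) + G.mulVec (w (i + 1) - w i)) =
        a ⬝ᵥ F u - a ⬝ᵥ G.mulVec b := by
      rw [dotProduct_add, hFe, hGe]; ring
    rw [hexp] at hit
    have hab : a - b = u - w i := by rw [ha, hb]; abel
    have hp := hpolar a b
    rw [hab] at hp
    have hbn := hQnonneg b
    have := hit
    linarith
  -- sum the per-step inequalities
  have htel : ∑ i ∈ Finset.range (k + 1),
      ((Q (u - w (i + 1)) - Q (u - w i)) / 2) =
      (Q (u - w (k + 1)) - Q (u - w 0)) / 2 := by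
    rw [← Finset.sum_div, Finset.sum_range_sub (fun i => Q (u - w i))]
  have hsum : ∑ i ∈ Finset.range (k + 1),
      (θ u - θ (w (i + 1)) + (u - w (i + 1)) ⬝ᵥ F u) ≥ -(Q (u - w 0)) / 2 := by
    calc ∑ i ∈ Finset.range (k + 1), (θ u - θ (w (i + 1)) + (u - w (i + 1)) ⬝ᵥ F u)
        ≥ ∑ i ∈ Finset.range (k + 1), ((Q (u - w (i + 1)) - Q (u - w i)) / 2) :=
          Finset.sum_le_sum (fun i _ => hstep i)
      _ = (Q (u - w (k + 1)) - Q (u - w 0)) / 2 := htel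
      _ ≥ -(Q (u - w 0)) / 2 := by
          have := hQnonneg (u - w (k + 1)); linarith
  set S : Fin n → ℝ := ∑ i ∈ Finset.range (k + 1), w (i + 1) with hS
  -- rewrite the sum
  have hsum' : K * θ u - (∑ i ∈ Finset.range (k + 1), θ (w (i + 1))) +
      (K • u - S) ⬝ᵥ F u ≥ -(Q (u - w 0)) / 2 := by
    have e1 : ∑ i ∈ Finset.range (k + 1), (θ u - θ (w (i + 1)) + (u - w (i + 1)) ⬝ᵥ F u) =
        K * θ u - (∑ i ∈ Finset.range (k + 1), θ (w (i + 1))) + (K • u - S) ⬝ᵥ F u := by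
      have e2 : (K • u - S) ⬝ᵥ F u =
          ∑ i ∈ Finset.range (k + 1), ((u - w (i + 1)) ⬝ᵥ F u) := by
        have : K • u - S = ∑ i ∈ Finset.range (k + 1), (u - w (i + 1)) := by
          rw [Finset.sum_sub_distrib, Finset.sum_const, Finset.card_range, hS, hKdef]
          congr 1
          rw [← Nat.cast_smul_eq_nsmul ℝ]
          push_cast
          ring_nf
        rw [this, sum_dotProduct']
      rw [e2, Finset.sum_add_distrib, Finset.sum_sub_distrib, Finset.sum_const,
        Finset.card_range, nsmul_eq_mul, hKdef]
      push_cast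
      ring
    linarith [e1 ▸ hsum]
  -- Jensen
  have hJ : θ (K⁻¹ • S) ≤ K⁻¹ * ∑ i ∈ Finset.range (k + 1), θ (w (i + 1)) := by
    have h₁ : ∑ _i ∈ Finset.range (k + 1), K⁻¹ = 1 := by
      rw [Finset.sum_const, Finset.card_range, nsmul_eq_mul, hKdef]
      push_cast
      field_simp
    have := hθconv.map_sum_le (t := Finset.range (k + 1)) (w := fun _ => K⁻¹)
      (p := fun i => w (i + 1)) (fun i _ => by positivity) h₁
      (fun i _ => Set.mem_univ _)
    rw [← Finset.smul_sum, ← hS] at this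
    calc θ (K⁻¹ • S) ≤ ∑ i ∈ Finset.range (k + 1), K⁻¹ * θ (w (i + 1)) := this
      _ = K⁻¹ * ∑ i ∈ Finset.range (k + 1), θ (w (i + 1)) := by rw [Finset.mul_sum]
  -- conclude
  have hdp : (u - K⁻¹ • S) ⬝ᵥ F u = K⁻¹ * ((K • u - S) ⬝ᵥ F u) := by
    have : u - K⁻¹ • S = K⁻¹ • (K • u - S) := by
      rw [smul_sub, smul_smul, inv_mul_cancel₀ hKpos.ne', one_smul]
    rw [this, smul_dotProduct, smul_eq_mul]
  have key : θ u - θ (K⁻¹ • S) + (u - K⁻¹ • S) ⬝ᵥ F u ≥ -(Q (u - w 0)) / (2 * K) := by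
    have h1 : θ u - θ (K⁻¹ • S) + (u - K⁻¹ • S) ⬝ᵥ F u ≥
        K⁻¹ * (K * θ u - (∑ i ∈ Finset.range (k + 1), θ (w (i + 1))) +
          (K • u - S) ⬝ᵥ F u) := by
      rw [hdp]
      have h0 : K⁻¹ * (K * θ u - (∑ i ∈ Finset.range (k + 1), θ (w (i + 1))) +
          (K • u - S) ⬝ᵥ F u) = θ u - K⁻¹ * (∑ i ∈ Finset.range (k + 1), θ (w (i + 1))) +
          K⁻¹ * ((K • u - S) ⬝ᵥ F u) := by
        field_simp
      rw [h0]
      have hKinv : (0:ℝ) < K⁻¹ := by positivity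
      linarith
    have h2 : K⁻¹ * (K * θ u - (∑ i ∈ Finset.range (k + 1), θ (w (i + 1))) +
        (K • u - S) ⬝ᵥ F u) ≥ K⁻¹ * (-(Q (u - w 0)) / 2) := by
      apply mul_le_mul_of_nonneg_left hsum' (by positivity)
    have h3 : K⁻¹ * (-(Q (u - w 0)) / 2) = -(Q (u - w 0)) / (2 * K) := by
      rw [inv_mul_eq_div, div_div]
    linarith
  simpa [hKdef, hQdef, neg_div] using key
end

section
/- Under the same proximal point iteration hypotheses (θ convex, F monotone, G symmetric positive semidefinite, w^{k} ∈ Ω with θ(w) − θ(w^{k+1}) + ⟨w − w^{k+1}, F(w^{k+1}) + G(w^{k+1} − w^k)⟩ ≥ 0 for all w ∈ Ω and all k), the sequence (‖w^{k+1} − w^k‖_G)_{k≥1} is nonincreasing: ‖w^{k+1} − w^k‖_G ≤ ‖w^k − w^{k−1}‖_G for all k ≥ 1. -/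
open scoped Matrix

lemma psd_symm {n : ℕ} {G : Matrix (Fin n) (Fin n) ℝ} (hG : G.PosSemidef)
    (x y : Fin n → ℝ) : x ⬝ᵥ G.mulVec y = y ⬝ᵥ G.mulVec x := by
  have hGT : Gᵀ = G := by
    have := hG.1
    rwa [Matrix.IsHermitian, Matrix.conjTranspose_eq_transpose_of_trivial] at this
  rw [Matrix.dotProduct_mulVec, ← Matrix.mulVec_transpose, hGT, dotProduct_comm]

lemma psd_nonneg {n : ℕ} {G : Matrix (Fin n) (Fin n) ℝ} (hG : G.PosSemidef)
    (x : Fin n → ℝ) : 0 ≤ x ⬝ᵥ G.mulVec x := by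
  simpa using hG.dotProduct_mulVec_nonneg x

lemma psd_cs {n : ℕ} {G : Matrix (Fin n) (Fin n) ℝ} (hG : G.PosSemidef)
    (x y : Fin n → ℝ) :
    x ⬝ᵥ G.mulVec y ≤ Real.sqrt (x ⬝ᵥ G.mulVec x) * Real.sqrt (y ⬝ᵥ G.mulVec y) := by
  have key : (x ⬝ᵥ G.mulVec y) ^ 2 ≤ (x ⬝ᵥ G.mulVec x) * (y ⬝ᵥ G.mulVec y) := by
    have sq : ∀ t : ℝ, 0 ≤ (y ⬝ᵥ G.mulVec y) * (t * t) + (2 * (x ⬝ᵥ G.mulVec y)) * t + (x ⬝ᵥ G.mulVec x) := by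
      intro t
      have h := psd_nonneg hG (x + t • y)
      have hsymm := psd_symm hG x y
      simp only [Matrix.mulVec_add, Matrix.mulVec_smul, add_dotProduct,
        dotProduct_add, dotProduct_smul, smul_dotProduct,
        smul_eq_mul] at h
      rw [← hsymm] at h
      nlinarith [h]
    have := discrim_le_zero sq
    rw [discrim] at this
    nlinarith [this]
  calc x ⬝ᵥ G.mulVec y ≤ |x ⬝ᵥ G.mulVec y| := le_abs_self _
    _ = Real.sqrt ((x ⬝ᵥ G.mulVec y) ^ 2) := (Real.sqrt_sq_eq_abs _).symm
    _ ≤ Real.sqrt ((x ⬝ᵥ G.mulVec x) * (y ⬝ᵥ G.mulVec y)) := Real.sqrt_le_sqrt key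
    _ = _ := Real.sqrt_mul (psd_nonneg hG x) _

/-- The G-seminorm of the difference of consecutive proximal point iterates is nonincreasing. -/
theorem stmt13 {n : ℕ} (Ω : Set (Fin n → ℝ)) (hΩconv : Convex ℝ Ω)
    (θ : (Fin n → ℝ) → ℝ) (hθconv : ConvexOn ℝ Set.univ θ)
    (F : (Fin n → ℝ) → (Fin n → ℝ)) (hFmono : ∀ u v, 0 ≤ (u - v) ⬝ᵥ (F u - F v))
    (G : Matrix (Fin n) (Fin n) ℝ) (hG : G.PosSemidef)
    (w : ℕ → (Fin n → ℝ)) (hwΩ : ∀ k, w k ∈ Ω)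
    (hiter : ∀ k, ∀ u ∈ Ω, θ u - θ (w (k + 1)) +
      (u - w (k + 1)) ⬝ᵥ (F (w (k + 1)) + G.mulVec (w (k + 1) - w k)) ≥ 0) :
    ∀ k, 1 ≤ k →
      Real.sqrt ((w (k + 1) - w k) ⬝ᵥ G.mulVec (w (k + 1) - w k)) ≤
        Real.sqrt ((w k - w (k - 1)) ⬝ᵥ G.mulVec (w k - w (k - 1))) := by
  intro k hk
  obtain ⟨m, rfl⟩ : ∃ m, k = m + 1 := ⟨k - 1, (Nat.succ_pred_eq_of_pos hk).symm⟩
  simp only [Nat.add_sub_cancel]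
  set x := w (m + 2) - w (m + 1) with hx
  set y := w (m + 1) - w m with hy
  -- the two iteration inequalities
  have h1 := hiter (m + 1) (w (m + 1)) (hwΩ (m + 1))
  have h2 := hiter m (w (m + 2)) (hwΩ (m + 2))
  have hmono := hFmono (w (m + 2)) (w (m + 1))
  -- key inequality: x ⬝ G x ≤ x ⬝ G y
  have key : x ⬝ᵥ G.mulVec x ≤ x ⬝ᵥ G.mulVec y := by
    have e1 : w (m + 1) - w (m + 2) = -x := by rw [hx]; abel
    have e2 : w (m + 2) - w (m + 1) = x := rfl
    rw [show m + 1 + 1 = m + 2 from rfl] at h1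
    rw [e1] at h1
    rw [e2] at h2
    simp only [dotProduct_add, neg_dotProduct] at h1 h2
    have hsub : x ⬝ᵥ (F (w (m + 2)) - F (w (m + 1))) =
        x ⬝ᵥ F (w (m + 2)) - x ⬝ᵥ F (w (m + 1)) := by
      simp [dotProduct_sub]
    rw [e2] at hmono
    rw [hsub] at hmono
    linarith
  have hcs := psd_cs hG x y
  have hxx : 0 ≤ x ⬝ᵥ G.mulVec x := psd_nonneg hG x
  have hsq : Real.sqrt (x ⬝ᵥ G.mulVec x) ^ 2 ≤
      Real.sqrt (x ⬝ᵥ G.mulVec x) * Real.sqrt (y ⬝ᵥ G.mulVec y) := by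
    rw [Real.sq_sqrt hxx]; exact le_trans key hcs
  rcases eq_or_lt_of_le (Real.sqrt_nonneg (x ⬝ᵥ G.mulVec x)) with h0 | h0
  · rw [← h0]; exact Real.sqrt_nonneg _
  · nlinarith [hsq]
end

section
/- Under the proximal point iteration hypotheses above, if w* ∈ Ω satisfies θ(w) − θ(w*) + ⟨w − w*, F(w*)⟩ ≥ 0 for all w ∈ Ω (F monotone), then for each k: ‖w^{k+1} − w*‖_G² ≤ ‖w^k − w*‖_G² − ‖w^k − w^{k+1}‖_G². Consequently ∑_{k=0}^∞ ‖w^{k+1} − w^k‖_G² ≤ ‖w^0 − w*‖_G² and ‖w^k − w^{k−1}‖_G² ≤ ‖w^0 − w*‖_G²/k for all k ≥ 1 (using that ‖w^{k+1} − w^k‖_G is nonincreasing). -/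
open scoped Matrix

/-- Fejér-type contraction of the proximal point method in the G-seminorm, summability of
the successive differences, and the O(1/k) nonergodic rate. -/
theorem stmt14 {n : ℕ} (Ω : Set (Fin n → ℝ)) (hΩconv : Convex ℝ Ω)
    (θ : (Fin n → ℝ) → ℝ) (hθconv : ConvexOn ℝ Set.univ θ)
    (F : (Fin n → ℝ) → (Fin n → ℝ)) (hFmono : ∀ u v, 0 ≤ (u - v) ⬝ᵥ (F u - F v))
    (G : Matrix (Fin n) (Fin n) ℝ) (hG : G.PosSemidef)
    (w : ℕ → (Fin n → ℝ)) (hwΩ : ∀ k, w k ∈ Ω)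
    (hiter : ∀ k, ∀ u ∈ Ω, θ u - θ (w (k + 1)) +
      (u - w (k + 1)) ⬝ᵥ (F (w (k + 1)) + G.mulVec (w (k + 1) - w k)) ≥ 0)
    (wstar : Fin n → ℝ) (hstarΩ : wstar ∈ Ω)
    (hstar : ∀ u ∈ Ω, θ u - θ wstar + (u - wstar) ⬝ᵥ F wstar ≥ 0) :
    (∀ k, (w (k + 1) - wstar) ⬝ᵥ G.mulVec (w (k + 1) - wstar) ≤
        (w k - wstar) ⬝ᵥ G.mulVec (w k - wstar)
          - (w k - w (k + 1)) ⬝ᵥ G.mulVec (w k - w (k + 1))) ∧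
    (∀ m : ℕ, ∑ k ∈ Finset.range m, (w (k + 1) - w k) ⬝ᵥ G.mulVec (w (k + 1) - w k) ≤
        (w 0 - wstar) ⬝ᵥ G.mulVec (w 0 - wstar)) ∧
    (∀ k, 1 ≤ k → (w k - w (k - 1)) ⬝ᵥ G.mulVec (w k - w (k - 1)) ≤
        ((w 0 - wstar) ⬝ᵥ G.mulVec (w 0 - wstar)) / k) := by
  set Q : (Fin n → ℝ) → (Fin n → ℝ) → ℝ := fun x y => x ⬝ᵥ G.mulVec y with hQdef
  have hGT : Gᵀ = G := by
    rw [← Matrix.conjTranspose_eq_transpose_of_trivial]; exact hG.1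
  have hnonneg : ∀ x, 0 ≤ Q x x := fun x => by simpa using hG.dotProduct_mulVec_nonneg x
  have hsymm : ∀ x y, Q x y = Q y x := by
    intro x y
    simp only [hQdef]
    rw [Matrix.dotProduct_mulVec, ← Matrix.mulVec_transpose, hGT, dotProduct_comm]
  have haddL : ∀ x y z, Q (x + y) z = Q x z + Q y z := fun x y z => by
    simp [hQdef, add_dotProduct]
  have haddR : ∀ x y z, Q x (y + z) = Q x y + Q x z := fun x y z => by
    simp [hQdef, Matrix.mulVec_add, dotProduct_add]
  have hsubR : ∀ x y z, Q x (y - z) = Q x y - Q x z := fun x y z => by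
    simp [hQdef, Matrix.mulVec_sub, dotProduct_sub]
  have hnegneg : ∀ x, Q (-x) (-x) = Q x x := fun x => by
    simp [hQdef, Matrix.mulVec_neg, neg_dotProduct, dotProduct_neg]
  -- decomposition identity: x = a + d → Q x x = Q a a + 2 Q a d + Q d d
  have hexp : ∀ a d, Q (a + d) (a + d) = Q a a + 2 * Q a d + Q d d := by
    intro a d
    rw [haddL, haddR, haddR, hsymm d a]; ring
  -- Part 1
  have part1 : ∀ k, Q (w (k + 1) - wstar) (w (k + 1) - wstar) ≤
      Q (w k - wstar) (w k - wstar) - Q (w k - w (k + 1)) (w k - w (k + 1)) := by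
    intro k
    have h1 := hiter k wstar hstarΩ
    have h2 := hstar (w (k + 1)) (hwΩ (k + 1))
    have h3 := hFmono (w (k + 1)) wstar
    -- cross term nonneg
    have hdot1 : (wstar - w (k + 1)) ⬝ᵥ (F (w (k + 1)) + G.mulVec (w (k + 1) - w k)) =
        (wstar - w (k + 1)) ⬝ᵥ F (w (k + 1)) + (wstar - w (k + 1)) ⬝ᵥ G.mulVec (w (k + 1) - w k) := by
      rw [dotProduct_add]
    have hmono' : (wstar - w (k + 1)) ⬝ᵥ (F (w (k + 1)) - F wstar) ≤ 0 := by
      have := hFmono (w (k + 1)) wstar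
      have heq : (wstar - w (k + 1)) ⬝ᵥ (F (w (k + 1)) - F wstar)
          = -((w (k + 1) - wstar) ⬝ᵥ (F (w (k + 1)) - F wstar)) := by
        rw [show wstar - w (k + 1) = -(w (k + 1) - wstar) by abel, neg_dotProduct]
      rw [heq]; linarith
    have hcross : 0 ≤ Q (w (k + 1) - wstar) (w k - w (k + 1)) := by
      have hsplit : (wstar - w (k + 1)) ⬝ᵥ (F (w (k + 1)) - F wstar)
          = (wstar - w (k + 1)) ⬝ᵥ F (w (k + 1)) - (wstar - w (k + 1)) ⬝ᵥ F wstar := by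
        rw [dotProduct_sub]
      have hstar' : (w (k + 1) - wstar) ⬝ᵥ F wstar = -((wstar - w (k + 1)) ⬝ᵥ F wstar) := by
        rw [show w (k + 1) - wstar = -(wstar - w (k + 1)) by abel, neg_dotProduct]
      have hgq : (wstar - w (k + 1)) ⬝ᵥ G.mulVec (w (k + 1) - w k)
          = Q (w (k + 1) - wstar) (w k - w (k + 1)) := by
        simp only [hQdef]
        rw [show wstar - w (k + 1) = -(w (k + 1) - wstar) by abel,
          show w (k + 1) - w k = -(w k - w (k + 1)) by abel,
          neg_dotProduct, Matrix.mulVec_neg, dotProduct_neg, neg_neg]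
      rw [hdot1] at h1
      rw [hstar'] at h2
      rw [hsplit] at hmono'
      rw [hgq] at h1
      linarith
    have hdecomp : w k - wstar = (w (k + 1) - wstar) + (w k - w (k + 1)) := by abel
    have := hexp (w (k + 1) - wstar) (w k - w (k + 1))
    rw [← hdecomp] at this
    rw [this]; linarith
  -- Part 2 with remainder
  have hnegQ : ∀ k, Q (w (k + 1) - w k) (w (k + 1) - w k) = Q (w k - w (k + 1)) (w k - w (k + 1)) := by
    intro k
    rw [show w (k + 1) - w k = -(w k - w (k + 1)) by abel, hnegneg]
  have part2' : ∀ m : ℕ, (∑ k ∈ Finset.range m, Q (w (k + 1) - w k) (w (k + 1) - w k))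
      + Q (w m - wstar) (w m - wstar) ≤ Q (w 0 - wstar) (w 0 - wstar) := by
    intro m
    induction m with
    | zero => simp
    | succ m ih =>
      rw [Finset.sum_range_succ]
      have := part1 m
      rw [← hnegQ m] at this
      linarith
  have part2 : ∀ m : ℕ, (∑ k ∈ Finset.range m, Q (w (k + 1) - w k) (w (k + 1) - w k)) ≤
      Q (w 0 - wstar) (w 0 - wstar) := by
    intro m
    have := part2' m
    have := hnonneg (w m - wstar)
    linarith
  -- monotonicity of successive differences
  have hmonostep : ∀ k, Q (w (k + 2) - w (k + 1)) (w (k + 2) - w (k + 1)) ≤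
      Q (w (k + 1) - w k) (w (k + 1) - w k) := by
    intro k
    set p := w (k + 1) - w k with hp
    set q := w (k + 2) - w (k + 1) with hq
    have h1 := hiter k (w (k + 2)) (hwΩ (k + 2))
    have h2 := hiter (k + 1) (w (k + 1)) (hwΩ (k + 1))
    have h3 := hFmono (w (k + 2)) (w (k + 1))
    have e1 : (w (k + 2) - w (k + 1)) ⬝ᵥ (F (w (k + 1)) + G.mulVec (w (k + 1) - w k))
        = q ⬝ᵥ F (w (k + 1)) + Q q p := by
      rw [dotProduct_add]
    have e2 : (w (k + 1) - w (k + 2)) ⬝ᵥ (F (w (k + 2)) + G.mulVec (w (k + 2) - w (k + 1)))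
        = -(q ⬝ᵥ F (w (k + 2))) - Q q q := by
      rw [dotProduct_add,
        show w (k + 1) - w (k + 2) = -q by rw [hq]; abel,
        neg_dotProduct, neg_dotProduct]
      ring
    have e3 : (w (k + 2) - w (k + 1)) ⬝ᵥ (F (w (k + 2)) - F (w (k + 1)))
        = q ⬝ᵥ F (w (k + 2)) - q ⬝ᵥ F (w (k + 1)) := by
      rw [dotProduct_sub]
    rw [e1] at h1; rw [e2] at h2; rw [e3] at h3
    -- from h1+h2+h3 : Q q p - Q q q ≥ 0
    have hcross : 0 ≤ Q q (p - q) := by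
      rw [hsubR]
      have := hsymm q p
      linarith
    have hdecomp : p = (p - q) + q := by abel
    have hid := hexp (p - q) q
    rw [← hdecomp] at hid
    have h4 := hnonneg (p - q)
    have h5 := hsymm (p - q) q
    have h6 : Q q (p - q) = Q q p - Q q q := hsubR q p q
    rw [hsubR] at hcross
    nlinarith [hsymm q p]
  have hmono2 : ∀ i j, i ≤ j → Q (w (j + 1) - w j) (w (j + 1) - w j) ≤
      Q (w (i + 1) - w i) (w (i + 1) - w i) := by
    intro i j hij
    induction j with
    | zero => simp_all
    | succ j ih =>
      rcases Nat.lt_or_ge i (j + 1) with h | h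
      · exact le_trans (hmonostep j) (ih (Nat.lt_succ_iff.mp h))
      · have : i = j + 1 := le_antisymm hij h
        subst this; exact le_rfl
  refine ⟨part1, part2, ?_⟩
  intro k hk
  obtain ⟨m, rfl⟩ : ∃ m, k = m + 1 := ⟨k - 1, (Nat.succ_pred_eq_of_pos hk).symm⟩
  have hsum : (m + 1 : ℝ) * Q (w (m + 1) - w m) (w (m + 1) - w m) ≤
      ∑ j ∈ Finset.range (m + 1), Q (w (j + 1) - w j) (w (j + 1) - w j) := by
    have : ∀ j ∈ Finset.range (m + 1), Q (w (m + 1) - w m) (w (m + 1) - w m) ≤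
        Q (w (j + 1) - w j) (w (j + 1) - w j) := by
      intro j hj
      exact hmono2 j m (Nat.lt_succ_iff.mp (Finset.mem_range.mp hj))
    calc (m + 1 : ℝ) * Q (w (m + 1) - w m) (w (m + 1) - w m)
        = ∑ _j ∈ Finset.range (m + 1), Q (w (m + 1) - w m) (w (m + 1) - w m) := by
          rw [Finset.sum_const, Finset.card_range, nsmul_eq_mul]; push_cast; ring
      _ ≤ _ := Finset.sum_le_sum this
  have htot := le_trans hsum (part2 (m + 1))
  have hkpos : (0 : ℝ) < (m : ℝ) + 1 := by positivity
  simp only [Nat.add_sub_cancel]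
  rw [show ((m + 1 : ℕ) : ℝ) = (m : ℝ) + 1 by push_cast; ring, le_div_iff₀ hkpos, mul_comm]
  exact htot
end
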